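/- Let B ≥ 2 be an integer base and k ≥ 1. If (a, b, c) is a digit-block triple with property P*_k, then, writing c_k = c mod B and M = (B^k − B)/(B − 1), the integer b·B − (B − 1)·c_k is positive and divides b·c_k·B^{k−1}, and a = b·M/B + b·c_k·B^{k−1}/(b·B − (B − 1)·c_k), i.e., a·(b·B − (B − 1)·c_k)·B = b·M·(b·B − (B − 1)·c_k) + b·c_k·B^k. -/

import Mathlib

set_option maxHeartbeats 1000000


/-- For a nontrivial solution of `P*_k`, writing `c_k = c % B` and
`M = (B^k − B)/(B − 1)`, the integer `b·B − (B − 1)·c_k` is positive, divides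
`b·c_k·B^{k−1}`, and
`a = b·M/B + b·c_k·B^{k−1}/(b·B − (B − 1)·c_k)`, i.e.
`a·(b·B − (B − 1)·c_k)·B = b·M·(b·B − (B − 1)·c_k) + b·c_k·B^k`. -/
theorem stmt_17 (B k a b c : ℕ) (hB : 2 ≤ B) (hk : 1 ≤ k)
    (ha₁ : B ^ (k - 1) ≤ a) (ha₂ : a < B ^ k) (hb : b < B) (hc : c < B ^ k)
    (hP : (a * B + b) * c = a * (b * B ^ k + c))
    (hz : ¬(a = 0 ∧ b = 0) ∧ ¬(a = 0 ∧ c = 0) ∧ ¬(b = 0 ∧ c = 0))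
    (hne : ¬(a = b * ((B ^ k - 1) / (B - 1)) ∧ c = b * ((B ^ k - 1) / (B - 1)))) :
    0 < (b : ℤ) * B - ((B : ℤ) - 1) * (c % B : ℕ) ∧
    ((b : ℤ) * B - ((B : ℤ) - 1) * (c % B : ℕ)) ∣
      (b : ℤ) * (c % B : ℕ) * (B : ℤ) ^ (k - 1) ∧
    (a : ℤ) * ((b : ℤ) * B - ((B : ℤ) - 1) * (c % B : ℕ)) * B =
      (b : ℤ) * ((B ^ k - B) / (B - 1) : ℕ) *
        ((b : ℤ) * B - ((B : ℤ) - 1) * (c % B : ℕ)) +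
      (b : ℤ) * (c % B : ℕ) * (B : ℤ) ^ k := by
  obtain ⟨m, rfl⟩ : ∃ m, k = m + 1 := ⟨k - 1, (Nat.succ_pred_eq_of_pos hk).symm⟩
  simp only [Nat.add_sub_cancel] at ha₁ ⊢
  have ha0 : 0 < a := lt_of_lt_of_le (Nat.one_le_pow _ _ (by omega)) ha₁
  -- b and c are positive
  have hc1' : True := trivial
  have hc1 : 0 < c := by
    rcases Nat.eq_zero_or_pos c with h | h
    · exfalso
      rw [h, Nat.mul_zero, Nat.add_zero] at hP
      have hb0 : b = 0 := by
        have h2 : a * (b * B ^ (m + 1)) = 0 := hP.symm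
        have hBp : 0 < B ^ (m + 1) := Nat.pow_pos (by omega)
        rcases Nat.mul_eq_zero.mp h2 with h1 | h1
        · omega
        · rcases Nat.mul_eq_zero.mp h1 with h2 | h2
          · exact h2
          · omega
      exact hz.2.2 ⟨hb0, h⟩
    · exact h
  have hb1 : 0 < b := by
    rcases Nat.eq_zero_or_pos b with h | h
    · exfalso
      rw [h] at hP
      simp only [Nat.add_zero, Nat.zero_mul, Nat.zero_add] at hP
      -- hP : a * B * c = a * c
      have h1 : 0 < a * c := Nat.mul_pos ha0 hc1
      have h2 : a * c * 2 ≤ a * c * B := Nat.mul_le_mul_left (a * c) hB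
      nlinarith
    · exact h
  -- M facts in ℕ
  have hd1 : (B - 1) ∣ B ^ m - 1 := by
    simpa using Nat.sub_dvd_pow_sub_pow B 1 m
  have hBm1 : B * (B ^ m - 1) = B ^ (m + 1) - B := by
    have h1 : 1 ≤ B ^ m := Nat.one_le_pow _ _ (by omega)
    have h2 : B * B ^ m = B ^ (m + 1) := by ring
    have h4 : B * (B ^ m - 1 + 1) = B * B ^ m := by rw [Nat.sub_add_cancel h1]
    rw [Nat.mul_add] at h4
    omega
  have hd2 : (B - 1) ∣ B ^ (m + 1) - B := by
    rw [← hBm1]; exact Dvd.dvd.mul_left hd1 B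
  have hM'n : (B ^ m - 1) / (B - 1) * (B - 1) = B ^ m - 1 := Nat.div_mul_cancel hd1
  have hMn : (B ^ (m + 1) - B) / (B - 1) * (B - 1) = B ^ (m + 1) - B := Nat.div_mul_cancel hd2
  have hMBn : (B ^ (m + 1) - B) / (B - 1) = B * ((B ^ m - 1) / (B - 1)) := by
    apply Nat.eq_of_mul_eq_mul_right (show 0 < B - 1 by omega)
    rw [hMn, Nat.mul_assoc, hM'n, hBm1]
  -- cast to ℤ
  set Mz : ℤ := (((B ^ (m + 1) - B) / (B - 1) : ℕ) : ℤ) with hMzdef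
  set M' : ℤ := (((B ^ m - 1) / (B - 1) : ℕ) : ℤ) with hM'def
  clear_value Mz M'
  have hBle : B ≤ B ^ (m + 1) := Nat.le_self_pow (by omega) B
  have h1le : 1 ≤ B ^ m := Nat.one_le_pow _ _ (by omega)
  have hMZ : Mz * ((B : ℤ) - 1) = (B : ℤ) ^ (m + 1) - B := by
    have h := congrArg (Nat.cast : ℕ → ℤ) hMn
    rw [Nat.cast_mul, Nat.cast_sub hBle, Nat.cast_sub (show 1 ≤ B by omega),
      Nat.cast_pow, Nat.cast_one] at h
    rw [hMzdef]; exact h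
  have hM'Z : M' * ((B : ℤ) - 1) = (B : ℤ) ^ m - 1 := by
    have h := congrArg (Nat.cast : ℕ → ℤ) hM'n
    rw [Nat.cast_mul, Nat.cast_sub h1le, Nat.cast_sub (show 1 ≤ B by omega),
      Nat.cast_pow, Nat.cast_one] at h
    rw [hM'def]; exact h
  have hMBZ : Mz = (B : ℤ) * M' := by
    rw [hMzdef, hM'def, hMBn, Nat.cast_mul]
  -- the key equation in ℤ
  have hPZ : ((a : ℤ) * B + b) * c = (a : ℤ) * (b * B ^ (m + 1) + c) := by exact_mod_cast hP
  have key : (b : ℤ) * c = (a : ℤ) * (b * B ^ (m + 1) - (B - 1) * c) := by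
    linear_combination hPZ
  -- numeric facts in ℤ
  have haZ : ((B : ℤ)) ^ m ≤ a := by exact_mod_cast ha₁
  have hbZ : (b : ℤ) < B := by exact_mod_cast hb
  have hb1Z : (1 : ℤ) ≤ b := by exact_mod_cast hb1
  have hc1Z : (1 : ℤ) ≤ c := by exact_mod_cast hc1
  have ha0Z : (1 : ℤ) ≤ a := by exact_mod_cast ha0
  have hBZ : (2 : ℤ) ≤ B := by exact_mod_cast hB
  have hMz0 : (0 : ℤ) ≤ Mz := by rw [hMzdef]; positivity
  have hM'0 : (0 : ℤ) ≤ M' := by rw [hM'def]; positivity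
  -- r = c - b*Mz satisfies the linear equation
  have hreq : ((a : ℤ) * (B - 1) + b) * ((c : ℤ) - b * Mz) = (b : ℤ) * (a * B - b * Mz) := by
    linear_combination key - (a : ℤ) * b * hMZ
  have haB : (b : ℤ) * Mz < a * B := by
    have h1 : (b : ℤ) ≤ B - 1 := by linarith
    have e1 := mul_le_mul_of_nonneg_right h1 hMz0
    have e2 := mul_le_mul_of_nonneg_right haZ (show (0 : ℤ) ≤ B by linarith)
    have e3 : (B : ℤ) ^ (m + 1) = B ^ m * B := by ring
    nlinarith [hMZ]
  have hcoef : (0 : ℤ) < a * (B - 1) + b := by nlinarith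
  have hr0 : (0 : ℤ) < (c : ℤ) - b * Mz := by
    by_contra h
    push_neg at h
    have hrhs : (0 : ℤ) < b * (a * B - b * Mz) :=
      mul_pos (by linarith) (by linarith)
    linarith [mul_nonneg hcoef.le (neg_nonneg.mpr h), hreq, hrhs]
  have hbB1 : (0 : ℤ) ≤ B - 1 - b := by linarith
  have hrB : (c : ℤ) - b * Mz < B := by
    have hstep : (b : ℤ) * (a * B - b * Mz) < B * (a * (B - 1) + b) := by
      nlinarith [mul_nonneg (mul_nonneg (by linarith : (0:ℤ) ≤ a) (by linarith : (0:ℤ) ≤ B)) hbB1,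
        mul_nonneg (mul_nonneg (by linarith : (0:ℤ) ≤ b) (by linarith : (0:ℤ) ≤ b)) hMz0]
    by_contra h
    push_neg at h
    linarith [mul_le_mul_of_nonneg_left h hcoef.le, hreq, hstep]
  -- identify r with c % B
  have hc0eq : (((c % B : ℕ)) : ℤ) = (c : ℤ) - b * Mz := by
    have hdvd : ((c : ℤ) - b * Mz) % B = (c : ℤ) % B := by
      have e : (c : ℤ) - b * Mz = c - B * (b * M') := by rw [hMBZ]; ring
      have e2 : (c : ℤ) - B * (b * M') = c + (B : ℤ) * (-(b * M')) := by ring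
      rw [e, e2, Int.add_mul_emod_self_left]
    have e2 : ((c : ℤ) - b * Mz) % B = (c : ℤ) - b * Mz :=
      Int.emod_eq_of_lt hr0.le hrB
    have e3 : (((c % B : ℕ)) : ℤ) = (c : ℤ) % B := by push_cast; ring
    rw [e3, ← hdvd, e2]
  set c0 : ℤ := (((c % B : ℕ)) : ℤ) with hc0def
  clear_value c0
  -- main algebraic identities
  have haE2 : (a : ℤ) * (b * B - (B - 1) * c0) = b * c := by
    rw [hc0eq]
    linear_combination (-1 : ℤ) * key + (a : ℤ) * b * hMZ
  have haE : (a : ℤ) * (b * B - (B - 1) * c0) = b * (b * Mz + c0) := by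
    linear_combination haE2 - (b : ℤ) * hc0eq
  have hbc : (0 : ℤ) < b * c := mul_pos (by linarith) (by linarith)
  have hEpos : (0 : ℤ) < b * B - (B - 1) * c0 := by
    by_contra h
    push_neg at h
    have h2 : (a : ℤ) * (b * B - (B - 1) * c0) ≤ 0 :=
      mul_nonpos_iff.mpr (Or.inl ⟨by linarith, h⟩)
    linarith [haE2]
  refine ⟨hEpos, ⟨(a : ℤ) - b * M', ?_⟩, ?_⟩
  · linear_combination (-1 : ℤ) * haE - (b : ℤ) * c0 * hM'Z - (b : ℤ) * b * hMBZ
  · linear_combination (B : ℤ) * haE + (b : ℤ) * c0 * hMZ
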